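/- Fix an integer d ≥ 2 and a unit vector ψ ∈ ℂ^d, and set Q := (|ψ⟩⟨ψ|)ᵀ = |ψ̄⟩⟨ψ̄|. Define the performance operator on ℂ^d_I ⊗ ℂ^d_O ⊗ ℂ^d_F by Ω := (1/(2 d_S)) · (1_d + Q)_O ⊗ P^S_{IF} + (1/(2 d_A)) · (1_d − Q)_O ⊗ P^A_{IF}, where 1_d + Q and 1_d − Q act on the factor O and P^S, P^A act on the factors I, F. Then the maximum of Tr(S Ω) over all single-call deterministic superchannels S equals (d+3)/(d(d+1)), and it is attained. This quantity is the optimal average fidelity of a deterministic single-call protocol transforming an arbitrary unknown U ∈ SU(d) into the state U†|ψ⟩⟨ψ|U on the known pure state ψ. -/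

import Mathlib

open Matrix Kronecker BigOperators ComplexOrder

noncomputable section

/-- Entrywise complex conjugate `U̅` of a matrix. -/
def mconj {d : ℕ} (U : Matrix (Fin d) (Fin d) ℂ) : Matrix (Fin d) (Fin d) ℂ :=
  U.map (starRingEnd ℂ)

/-- Rank-one outer product `|v⟩⟨v|`. -/
def outer {n : Type*} (v : n → ℂ) : Matrix n n ℂ :=
  Matrix.vecMulVec v (star v)

/-- Choi vector `|U⟩⟩ = Σ_i e_i ⊗ U e_i`. -/
def choiVec {d : ℕ} (U : Matrix (Fin d) (Fin d) ℂ) : Fin d × Fin d → ℂ :=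
  fun p => U p.2 p.1

/-- `|U⟩⟩⟨⟨U|`. -/
def choiProj {d : ℕ} (U : Matrix (Fin d) (Fin d) ℂ) :
    Matrix (Fin d × Fin d) (Fin d × Fin d) ℂ :=
  outer (choiVec U)

/-- Partial trace over the first tensor factor. -/
def ptrLeft {α β : Type*} [Fintype α] (S : Matrix (α × β) (α × β) ℂ) :
    Matrix β β ℂ :=
  fun b b' => ∑ a, S (a, b) (a, b')

/-- Partial trace over the second (last) tensor factor. -/
def ptrRight {α β : Type*} [Fintype β] (S : Matrix (α × β) (α × β) ℂ) :
    Matrix α α ℂ :=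
  fun a a' => ∑ b, S (a, b) (a', b)

/-- Action `S ⋆ U := Tr_{IO}[ S · (|U̅⟩⟩⟨⟨U̅|_{IO} ⊗ 1_F) ]` of a single-call
supermap `S` on `I ⊗ O ⊗ F` applied to the unitary channel given by `U`. -/
def act {d dF : ℕ}
    (S : Matrix ((Fin d × Fin d) × Fin dF) ((Fin d × Fin d) × Fin dF) ℂ)
    (U : Matrix (Fin d) (Fin d) ℂ) : Matrix (Fin dF) (Fin dF) ℂ :=
  ptrLeft (S * (choiProj (mconj U) ⊗ₖ (1 : Matrix (Fin dF) (Fin dF) ℂ)))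

/-- A single-call deterministic superchannel (channels-to-states):
`S ≥ 0` with `Tr_F(S) = σ ⊗ 1_d`, `σ ≥ 0`, `Tr σ = 1`. -/
def IsSuperchannel {d dF : ℕ}
    (S : Matrix ((Fin d × Fin d) × Fin dF) ((Fin d × Fin d) × Fin dF) ℂ) : Prop :=
  S.PosSemidef ∧
    ∃ σ : Matrix (Fin d) (Fin d) ℂ, σ.PosSemidef ∧ σ.trace = 1 ∧
      ptrRight S = σ ⊗ₖ (1 : Matrix (Fin d) (Fin d) ℂ)

/-- The flip (SWAP) operator on `ℂ^d ⊗ ℂ^d`. -/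
def swapMat (d : ℕ) : Matrix (Fin d × Fin d) (Fin d × Fin d) ℂ :=
  fun x y => if x.1 = y.2 ∧ x.2 = y.1 then 1 else 0

/-- Projector onto the symmetric subspace, `P^S = (1 + SWAP)/2`. -/
def Psym (d : ℕ) : Matrix (Fin d × Fin d) (Fin d × Fin d) ℂ :=
  (2 : ℂ)⁻¹ • ((1 : Matrix (Fin d × Fin d) (Fin d × Fin d) ℂ) + swapMat d)

/-- Projector onto the antisymmetric subspace, `P^A = (1 − SWAP)/2`. -/
def Pasym (d : ℕ) : Matrix (Fin d × Fin d) (Fin d × Fin d) ℂ :=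
  (2 : ℂ)⁻¹ • ((1 : Matrix (Fin d × Fin d) (Fin d × Fin d) ℂ) - swapMat d)

/-- The performance operator
`Ω = (1/(2 d_S))·(1 + Q)_O ⊗ P^S_{IF} + (1/(2 d_A))·(1 − Q)_O ⊗ P^A_{IF}` with
`Q = (|ψ⟩⟨ψ|)ᵀ`, `d_S = d(d+1)/2`, `d_A = d(d−1)/2`, written on the index order
`(I × O) × F`. -/
def OmegaInv {d : ℕ} (ψ : Fin d → ℂ) :
    Matrix ((Fin d × Fin d) × Fin d) ((Fin d × Fin d) × Fin d) ℂ :=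
  fun x y =>
    (2 * ((d : ℂ) * ((d : ℂ) + 1) / 2))⁻¹ *
        ((1 : Matrix (Fin d) (Fin d) ℂ) + (outer ψ)ᵀ) x.1.2 y.1.2 *
        Psym d (x.1.1, x.2) (y.1.1, y.2)
    + (2 * ((d : ℂ) * ((d : ℂ) - 1) / 2))⁻¹ *
        ((1 : Matrix (Fin d) (Fin d) ℂ) - (outer ψ)ᵀ) x.1.2 y.1.2 *
        Pasym d (x.1.1, x.2) (y.1.1, y.2)

/-! ### Auxiliary lemmas -/

section Aux

lemma psd_smul {n : Type*} [Fintype n] {M : Matrix n n ℂ} (hM : M.PosSemidef)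
    {c : ℂ} (hc : 0 ≤ c) : (c • M).PosSemidef := by
  have hcs : star c = c := by
    rw [Complex.star_def, Complex.conj_eq_iff_im]
    exact ((Complex.le_def).mp hc).2.symm
  refine posSemidef_iff_dotProduct_mulVec.mpr ⟨?_, fun x => ?_⟩
  · show (c • M)ᴴ = c • M
    rw [conjTranspose_smul, hM.1, hcs]
  · rw [smul_mulVec, dotProduct_smul, smul_eq_mul]
    exact mul_nonneg hc (hM.dotProduct_mulVec_nonneg x)

lemma psd_trace_nonneg {n : Type*} [Fintype n] [DecidableEq n] {M : Matrix n n ℂ}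
    (hM : M.PosSemidef) : 0 ≤ M.trace := by
  refine Finset.sum_nonneg fun i _ => ?_
  have := hM.dotProduct_mulVec_nonneg (Pi.single i 1)
  simpa [dotProduct, mulVec, Pi.single_apply, Finset.sum_ite_eq, mul_comm] using this

open scoped MatrixOrder in
lemma psd_exists_sq {n : Type*} [Fintype n] [DecidableEq n] {B : Matrix n n ℂ}
    (hB : B.PosSemidef) : ∃ C : Matrix n n ℂ, B = Cᴴ * C := by
  obtain ⟨X, hX, -, rfl⟩ := CFC.exists_sqrt_of_isSelfAdjoint_of_quasispectrumRestricts
    hB.isHermitian (QuasispectrumRestricts.nnreal_of_nonneg hB.nonneg)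
  exact ⟨X, by rw [← star_eq_conjTranspose, hX.star_eq]⟩

lemma psd_trace_mul_nonneg {n : Type*} [Fintype n] [DecidableEq n]
    {A B : Matrix n n ℂ} (hA : A.PosSemidef) (hB : B.PosSemidef) :
    0 ≤ (A * B).trace := by
  obtain ⟨C, hC⟩ := psd_exists_sq hB
  rw [hC, ← Matrix.mul_assoc, Matrix.trace_mul_cycle]
  exact psd_trace_nonneg (hA.mul_mul_conjTranspose_same C)

lemma psd_of_proj {n : Type*} [Fintype n] {P : Matrix n n ℂ}
    (h1 : Pᴴ = P) (h2 : P * P = P) : P.PosSemidef := by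
  have : P = Pᴴ * P := by rw [h1, h2]
  rw [this]; exact posSemidef_conjTranspose_mul_self P

lemma kron_conjTranspose {m n : Type*} [Fintype m] [Fintype n]
    (A : Matrix m m ℂ) (B : Matrix n n ℂ) : (A ⊗ₖ B)ᴴ = Aᴴ ⊗ₖ Bᴴ := by
  ext ⟨i,j⟩ ⟨k,l⟩
  simp [conjTranspose_apply, kroneckerMap_apply, mul_comm]

lemma psd_kron {m n : Type*} [Fintype m] [Fintype n] [DecidableEq m] [DecidableEq n]
    {A : Matrix m m ℂ} {B : Matrix n n ℂ} (hA : A.PosSemidef) (hB : B.PosSemidef) :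
    (A ⊗ₖ B).PosSemidef := by
  obtain ⟨C, hC⟩ := psd_exists_sq hA
  obtain ⟨D, hD⟩ := psd_exists_sq hB
  have : A ⊗ₖ B = (C ⊗ₖ D)ᴴ * (C ⊗ₖ D) := by
    rw [kron_conjTranspose, ← Matrix.mul_kronecker_mul, ← hC, ← hD]
  rw [this]; exact posSemidef_conjTranspose_mul_self _

lemma trace_submatrix_equiv {m n : Type*} [Fintype m] [Fintype n]
    (e : m ≃ n) (A : Matrix n n ℂ) : (A.submatrix e e).trace = A.trace := by
  unfold Matrix.trace Matrix.diag
  exact Fintype.sum_equiv e _ _ (fun i => rfl)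

/-- Reordering `(I × O) × F ≃ O × (I × F)`. -/
def eIOF (d : ℕ) : ((Fin d × Fin d) × Fin d) ≃ (Fin d × (Fin d × Fin d)) where
  toFun x := (x.1.2, (x.1.1, x.2))
  invFun q := ((q.2.1, q.1), q.2.2)
  left_inv := fun _ => rfl
  right_inv := fun _ => rfl

/-- `M` acting on the middle (O) factor tensored with `P` acting on the outer (I,F) factors. -/
def mixM {d : ℕ} (M : Matrix (Fin d) (Fin d) ℂ)
    (P : Matrix (Fin d × Fin d) (Fin d × Fin d) ℂ) :
    Matrix ((Fin d × Fin d) × Fin d) ((Fin d × Fin d) × Fin d) ℂ :=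
  ((M ⊗ₖ P).submatrix (eIOF d) (eIOF d))

lemma mixM_apply {d : ℕ} (M : Matrix (Fin d) (Fin d) ℂ)
    (P : Matrix (Fin d × Fin d) (Fin d × Fin d) ℂ) (x y) :
    mixM M P x y = M x.1.2 y.1.2 * P (x.1.1, x.2) (y.1.1, y.2) := rfl

lemma psd_mixM {d : ℕ} {M : Matrix (Fin d) (Fin d) ℂ}
    {P : Matrix (Fin d × Fin d) (Fin d × Fin d) ℂ}
    (hM : M.PosSemidef) (hP : P.PosSemidef) : (mixM M P).PosSemidef :=
  (posSemidef_submatrix_equiv (eIOF d)).mpr (psd_kron hM hP)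

lemma trace_mixM_mul {d : ℕ} (M M' : Matrix (Fin d) (Fin d) ℂ)
    (P P' : Matrix (Fin d × Fin d) (Fin d × Fin d) ℂ) :
    (mixM M P * mixM M' P').trace = (M * M').trace * (P * P').trace := by
  unfold mixM
  rw [Matrix.submatrix_mul_equiv, trace_submatrix_equiv, ← Matrix.mul_kronecker_mul,
    Matrix.trace_kronecker]

lemma trace_mul_kron_one {α β : Type*} [Fintype α] [Fintype β] [DecidableEq β]
    (S : Matrix (α × β) (α × β) ℂ) (M : Matrix α α ℂ) :
    (S * (M ⊗ₖ (1 : Matrix β β ℂ))).trace = (ptrRight S * M).trace := by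
  unfold Matrix.trace Matrix.diag ptrRight
  simp only [Matrix.mul_apply, kroneckerMap_apply, Matrix.one_apply, mul_ite, mul_one, mul_zero,
    Fintype.sum_prod_type, Finset.sum_ite_eq', Finset.mem_univ, if_true, Finset.sum_mul]
  exact Finset.sum_congr rfl fun a _ =>
    Finset.sum_comm.trans (Finset.sum_congr rfl fun j _ => (Finset.sum_mul _ _ _).symm)

lemma swap_herm (d : ℕ) : (swapMat d)ᴴ = swapMat d := by
  ext x y
  simp only [conjTranspose_apply, swapMat]
  by_cases h : y.1 = x.2 ∧ y.2 = x.1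
  · obtain ⟨h1, h2⟩ := h; simp [h1, h2]
  · have h' : ¬(x.1 = y.2 ∧ x.2 = y.1) := by tauto
    simp [swapMat, h, h']

lemma swap_mul_swap (d : ℕ) : swapMat d * swapMat d = 1 := by
  ext x y
  simp only [Matrix.mul_apply, swapMat, Matrix.one_apply, Fintype.sum_prod_type, ite_mul,
    one_mul, zero_mul]
  have key : ∀ c c' : Fin d,
      (if x.1 = c' ∧ x.2 = c then (if c = y.2 ∧ c' = y.1 then (1:ℂ) else 0) else 0)
      = if c = x.2 then (if c' = x.1 then (if x = y then (1:ℂ) else 0) else 0) else 0 := by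
    intro c c'
    by_cases h1 : c = x.2
    · by_cases h2 : c' = x.1
      · subst h1; subst h2
        simp [Prod.ext_iff, and_comm]
      · have h3 : ¬(x.1 = c' ∧ x.2 = c) := fun h => h2 h.1.symm
        rw [if_neg h3, if_neg h2]; simp
    · have h3 : ¬(x.1 = c' ∧ x.2 = c) := fun h => h1 h.2.symm
      rw [if_neg h3, if_neg h1]
  simp_rw [key]
  simp

lemma psym_add_pasym (d : ℕ) : Psym d + Pasym d = 1 := by
  ext x y
  simp [Psym, Pasym, Matrix.add_apply, Matrix.sub_apply, Matrix.smul_apply, smul_eq_mul]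
  ring

lemma psym_herm (d : ℕ) : (Psym d)ᴴ = Psym d := by
  unfold Psym
  rw [conjTranspose_smul, conjTranspose_add, conjTranspose_one, swap_herm]
  norm_num

lemma pasym_herm (d : ℕ) : (Pasym d)ᴴ = Pasym d := by
  unfold Pasym
  rw [conjTranspose_smul, conjTranspose_sub, conjTranspose_one, swap_herm]
  norm_num

lemma psym_mul_psym (d : ℕ) : Psym d * Psym d = Psym d := by
  unfold Psym
  rw [Matrix.smul_mul, Matrix.mul_smul, smul_smul]
  simp only [add_mul, mul_add, one_mul, mul_one, swap_mul_swap]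
  have : (1 : Matrix (Fin d × Fin d) (Fin d × Fin d) ℂ) + swapMat d + (swapMat d + 1)
      = (2:ℂ) • (1 + swapMat d) := by
    rw [two_smul]; abel
  rw [this, smul_smul]
  norm_num

lemma pasym_mul_pasym (d : ℕ) : Pasym d * Pasym d = Pasym d := by
  unfold Pasym
  rw [Matrix.smul_mul, Matrix.mul_smul, smul_smul]
  simp only [sub_mul, mul_sub, one_mul, mul_one, swap_mul_swap]
  have : (1 : Matrix (Fin d × Fin d) (Fin d × Fin d) ℂ) - swapMat d - (swapMat d - 1)
      = (2:ℂ) • (1 - swapMat d) := by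
    rw [two_smul]; abel
  rw [this, smul_smul]
  norm_num

lemma psym_mul_pasym (d : ℕ) : Psym d * Pasym d = 0 := by
  unfold Psym Pasym
  rw [Matrix.smul_mul, Matrix.mul_smul, smul_smul]
  simp only [add_mul, mul_sub, one_mul, mul_one, swap_mul_swap]
  have : (1 : Matrix (Fin d × Fin d) (Fin d × Fin d) ℂ) + swapMat d - (swapMat d + 1) = 0 := by
    abel
  rw [this, smul_zero]

lemma pasym_mul_psym (d : ℕ) : Pasym d * Psym d = 0 := by
  unfold Psym Pasym
  rw [Matrix.smul_mul, Matrix.mul_smul, smul_smul]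
  simp only [sub_mul, mul_add, one_mul, mul_one, swap_mul_swap]
  have : (1 : Matrix (Fin d × Fin d) (Fin d × Fin d) ℂ) - swapMat d + (swapMat d - 1) = 0 := by
    abel
  rw [this, smul_zero]

lemma swap_trace (d : ℕ) : (swapMat d).trace = (d : ℂ) := by
  unfold Matrix.trace Matrix.diag swapMat
  rw [Fintype.sum_prod_type]
  have key : ∀ i j : Fin d, (if i = j ∧ j = i then (1:ℂ) else 0) = if j = i then 1 else 0 := by
    intro i j; by_cases h : j = i <;> simp [h]
  simp_rw [key]
  simp

lemma psym_trace (d : ℕ) : (Psym d).trace = ((d:ℂ) * d + d) / 2 := by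
  unfold Psym
  rw [Matrix.trace_smul, Matrix.trace_add, Matrix.trace_one, swap_trace]
  simp [Fintype.card_prod, smul_eq_mul]
  ring

lemma pasym_trace (d : ℕ) : (Pasym d).trace = ((d:ℂ) * d - d) / 2 := by
  unfold Pasym
  rw [Matrix.trace_smul, Matrix.trace_sub, Matrix.trace_one, swap_trace]
  simp [Fintype.card_prod, smul_eq_mul]
  ring

lemma sum_swap_diag (d : ℕ) (i i' : Fin d) :
    ∑ f, swapMat d (i, f) (i', f) = (1 : Matrix (Fin d) (Fin d) ℂ) i i' := by
  unfold swapMat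
  rw [Matrix.one_apply]
  have key : ∀ f : Fin d, (if i = f ∧ f = i' then (1:ℂ) else 0)
      = if f = i then (if i = i' then (1:ℂ) else 0) else 0 := by
    intro f
    by_cases h : f = i
    · subst h; by_cases h2 : f = i' <;> simp [h2]
    · have : ¬(i = f ∧ f = i') := fun hh => h hh.1.symm
      rw [if_neg this, if_neg h]
  simp_rw [key]
  simp

lemma sum_one_diag (d : ℕ) (i i' : Fin d) :
    ∑ f, (1 : Matrix (Fin d × Fin d) (Fin d × Fin d) ℂ) (i, f) (i', f)
      = (d : ℂ) * (1 : Matrix (Fin d) (Fin d) ℂ) i i' := by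
  simp only [Matrix.one_apply, Prod.mk.injEq]
  by_cases h : i = i' <;> simp [h]

lemma sum_psym_diag (d : ℕ) (i i' : Fin d) :
    ∑ f, Psym d (i, f) (i', f) = (((d:ℂ) + 1)/2) * (1 : Matrix (Fin d) (Fin d) ℂ) i i' := by
  unfold Psym
  simp only [Matrix.smul_apply, Matrix.add_apply, smul_eq_mul]
  rw [Finset.sum_congr rfl (fun f _ => mul_add _ _ _), Finset.sum_add_distrib,
    ← Finset.mul_sum, ← Finset.mul_sum, sum_swap_diag, sum_one_diag]
  ring

lemma sum_pasym_diag (d : ℕ) (i i' : Fin d) :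
    ∑ f, Pasym d (i, f) (i', f) = (((d:ℂ) - 1)/2) * (1 : Matrix (Fin d) (Fin d) ℂ) i i' := by
  unfold Pasym
  simp only [Matrix.smul_apply, Matrix.sub_apply, smul_eq_mul]
  rw [Finset.sum_congr rfl (fun f _ => mul_sub _ _ _), Finset.sum_sub_distrib,
    ← Finset.mul_sum, ← Finset.mul_sum, sum_swap_diag, sum_one_diag]
  ring

lemma Q_apply {d : ℕ} (ψ : Fin d → ℂ) (i j : Fin d) :
    (outer ψ)ᵀ i j = ψ j * star (ψ i) := rfl

lemma Q_herm {d : ℕ} (ψ : Fin d → ℂ) : ((outer ψ)ᵀ)ᴴ = (outer ψ)ᵀ := by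
  ext i j
  simp only [conjTranspose_apply, Q_apply, star_mul', star_star]
  ring

lemma Q_mul_Q {d : ℕ} {ψ : Fin d → ℂ} (hψ : star ψ ⬝ᵥ ψ = 1) :
    (outer ψ)ᵀ * (outer ψ)ᵀ = (outer ψ)ᵀ := by
  ext i j
  simp only [Matrix.mul_apply, Q_apply]
  have : ∀ k, (ψ k * star (ψ i)) * (ψ j * star (ψ k))
      = (ψ j * star (ψ i)) * (star (ψ k) * ψ k) := fun k => by ring
  simp_rw [this, ← Finset.mul_sum]
  have h : ∑ k, star (ψ k) * ψ k = 1 := by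
    simpa [dotProduct] using hψ
  rw [h, mul_one]

lemma Q_trace {d : ℕ} {ψ : Fin d → ℂ} (hψ : star ψ ⬝ᵥ ψ = 1) :
    ((outer ψ)ᵀ).trace = 1 := by
  unfold Matrix.trace Matrix.diag
  simp only [Q_apply]
  have : ∀ i, ψ i * star (ψ i) = star (ψ i) * ψ i := fun i => by ring
  simp_rw [this]
  simpa [dotProduct] using hψ

end Aux


/-- **Optimal deterministic (approximate) unitary inversion on a known pure state,
single call.** The maximum of `Tr(S Ω)` over single-call deterministic
superchannels `S` is `(d+3)/(d(d+1))`, and it is attained. -/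
theorem deterministic_inversion_optimal_fidelity
    (d : ℕ) (hd : 2 ≤ d) (ψ : Fin d → ℂ) (hψ : star ψ ⬝ᵥ ψ = 1) :
    IsGreatest
      {r : ℝ |
        ∃ S : Matrix ((Fin d × Fin d) × Fin d) ((Fin d × Fin d) × Fin d) ℂ,
          IsSuperchannel S ∧ (S * OmegaInv ψ).trace = (r : ℂ)}
      (((d : ℝ) + 3) / ((d : ℝ) * ((d : ℝ) + 1))) := by
  have hdR : (2:ℝ) ≤ (d:ℝ) := by exact_mod_cast hd
  have hdR0 : (0:ℝ) < (d:ℝ) := by linarith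
  have hdR1 : (0:ℝ) < (d:ℝ) + 1 := by linarith
  have hdRm1 : (0:ℝ) < (d:ℝ) - 1 := by linarith
  have hcast : ((d:ℝ) : ℂ) = (d:ℂ) := by push_cast; ring
  have hdne : (d:ℂ) ≠ 0 := by
    rw [← hcast]; exact Complex.ofReal_ne_zero.mpr (ne_of_gt hdR0)
  have hd1ne : (d:ℂ) + 1 ≠ 0 := by
    have h : (d:ℂ) + 1 = (((d:ℝ) + 1 : ℝ) : ℂ) := by push_cast; ring
    rw [h]; exact Complex.ofReal_ne_zero.mpr (ne_of_gt hdR1)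
  have hdm1ne : (d:ℂ) - 1 ≠ 0 := by
    have h : (d:ℂ) - 1 = (((d:ℝ) - 1 : ℝ) : ℂ) := by push_cast; ring
    rw [h]; exact Complex.ofReal_ne_zero.mpr (ne_of_gt hdRm1)
  have ha0 : (0:ℂ) ≤ ((d:ℂ) * ((d:ℂ) + 1))⁻¹ := by
    rw [show ((d:ℂ) * ((d:ℂ)+1))⁻¹ = ((((d:ℝ) * ((d:ℝ)+1))⁻¹ : ℝ) : ℂ) by push_cast; ring]
    exact Complex.zero_le_real.mpr (by positivity)
  have hb0 : (0:ℂ) ≤ ((d:ℂ) * ((d:ℂ) - 1))⁻¹ := by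
    rw [show ((d:ℂ) * ((d:ℂ)-1))⁻¹ = ((((d:ℝ) * ((d:ℝ)-1))⁻¹ : ℝ) : ℂ) by push_cast; ring]
    refine Complex.zero_le_real.mpr (le_of_lt (inv_pos.mpr (mul_pos hdR0 hdRm1)))
  have h2a0 : (0:ℂ) ≤ 2 * ((d:ℂ) * ((d:ℂ) + 1))⁻¹ := by
    have := mul_le_mul_of_nonneg_left ha0 (by norm_num : (0:ℂ) ≤ 2)
    simpa using this
  have h2b0 : (0:ℂ) ≤ 2 * ((d:ℂ) * ((d:ℂ) - 1))⁻¹ := by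
    have := mul_le_mul_of_nonneg_left hb0 (by norm_num : (0:ℂ) ≤ 2)
    simpa using this
  have hba0 : (0:ℂ) ≤ ((d:ℂ) * ((d:ℂ) - 1))⁻¹ - ((d:ℂ) * ((d:ℂ) + 1))⁻¹ := by
    rw [show ((d:ℂ) * ((d:ℂ)-1))⁻¹ - ((d:ℂ) * ((d:ℂ)+1))⁻¹
        = ((((d:ℝ) * ((d:ℝ)-1))⁻¹ - ((d:ℝ) * ((d:ℝ)+1))⁻¹ : ℝ) : ℂ) by push_cast; ring]
    refine Complex.zero_le_real.mpr ?_
    have h1 : ((d:ℝ)*((d:ℝ)+1))⁻¹ ≤ ((d:ℝ)*((d:ℝ)-1))⁻¹ :=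
      inv_anti₀ (mul_pos hdR0 hdRm1) (by nlinarith)
    linarith
  have hdinv0 : (0:ℂ) ≤ ((d:ℂ))⁻¹ := by
    rw [show ((d:ℂ))⁻¹ = ((((d:ℝ))⁻¹ : ℝ) : ℂ) by push_cast; ring]
    exact Complex.zero_le_real.mpr (by positivity)
  -- PSD building blocks
  have hQpsd : ((outer ψ)ᵀ).PosSemidef := psd_of_proj (Q_herm ψ) (Q_mul_Q hψ)
  have h1mQherm : ((1 : Matrix (Fin d) (Fin d) ℂ) - (outer ψ)ᵀ)ᴴ = 1 - (outer ψ)ᵀ := by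
    rw [conjTranspose_sub, conjTranspose_one, Q_herm]
  have h1mQproj : ((1 : Matrix (Fin d) (Fin d) ℂ) - (outer ψ)ᵀ) * (1 - (outer ψ)ᵀ)
      = 1 - (outer ψ)ᵀ := by
    rw [Matrix.sub_mul, Matrix.one_mul, Matrix.mul_sub, Matrix.mul_one, Q_mul_Q hψ]
    simp
  have h1mQpsd : ((1 : Matrix (Fin d) (Fin d) ℂ) - (outer ψ)ᵀ).PosSemidef :=
    psd_of_proj h1mQherm h1mQproj
  have hPspsd : (Psym d).PosSemidef := psd_of_proj (psym_herm d) (psym_mul_psym d)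
  have hPapsd : (Pasym d).PosSemidef := psd_of_proj (pasym_herm d) (pasym_mul_pasym d)
  -- Omega decomposition
  have hOm : OmegaInv ψ = ((d:ℂ) * ((d:ℂ) + 1))⁻¹ •
        mixM ((1 : Matrix (Fin d) (Fin d) ℂ) + (outer ψ)ᵀ) (Psym d)
      + ((d:ℂ) * ((d:ℂ) - 1))⁻¹ •
        mixM ((1 : Matrix (Fin d) (Fin d) ℂ) - (outer ψ)ᵀ) (Pasym d) := by
    funext x y
    have e1 : (2 * ((d : ℂ) * ((d : ℂ) + 1) / 2))⁻¹ = ((d:ℂ) * ((d:ℂ) + 1))⁻¹ := by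
      congr 1; ring
    have e2 : (2 * ((d : ℂ) * ((d : ℂ) - 1) / 2))⁻¹ = ((d:ℂ) * ((d:ℂ) - 1))⁻¹ := by
      congr 1; ring
    simp only [OmegaInv, Matrix.add_apply, Matrix.smul_apply, mixM_apply, smul_eq_mul, e1, e2]
    ring
  -- trace facts on the O factor
  have trace_one_d : (1 : Matrix (Fin d) (Fin d) ℂ).trace = (d:ℂ) := by
    simp [Matrix.trace_one]
  have tA : ((outer ψ)ᵀ * ((1 : Matrix (Fin d) (Fin d) ℂ) + (outer ψ)ᵀ)).trace = 2 := by
    rw [Matrix.mul_add, Matrix.mul_one, Q_mul_Q hψ, Matrix.trace_add, Q_trace hψ]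
    norm_num
  have tB : ((outer ψ)ᵀ * ((1 : Matrix (Fin d) (Fin d) ℂ) - (outer ψ)ᵀ)).trace = 0 := by
    rw [Matrix.mul_sub, Matrix.mul_one, Q_mul_Q hψ]
    simp
  have tC : (((1 : Matrix (Fin d) (Fin d) ℂ) - (outer ψ)ᵀ) * (1 + (outer ψ)ᵀ)).trace
      = (d:ℂ) - 1 := by
    rw [Matrix.sub_mul, Matrix.one_mul, Matrix.mul_add, Matrix.mul_one, Q_mul_Q hψ,
      Matrix.trace_sub, Matrix.trace_add, Matrix.trace_add, Q_trace hψ, trace_one_d]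
    ring
  have tD : (((1 : Matrix (Fin d) (Fin d) ℂ) - (outer ψ)ᵀ) * (1 - (outer ψ)ᵀ)).trace
      = (d:ℂ) - 1 := by
    rw [h1mQproj, Matrix.trace_sub, Q_trace hψ, trace_one_d]
  have tPs : (Psym d * Psym d).trace = ((d:ℂ) * d + d) / 2 := by
    rw [psym_mul_psym, psym_trace]
  have tPa : (Pasym d * Pasym d).trace = ((d:ℂ) * d - d) / 2 := by
    rw [pasym_mul_pasym, pasym_trace]
  have tPsPa : (Psym d * Pasym d).trace = 0 := by rw [psym_mul_pasym, Matrix.trace_zero]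
  have tPaPs : (Pasym d * Psym d).trace = 0 := by rw [pasym_mul_psym, Matrix.trace_zero]
  constructor
  · -- membership : the optimal superchannel
    refine ⟨(2 * ((d:ℂ) * ((d:ℂ) + 1))⁻¹) • mixM ((outer ψ)ᵀ) (Psym d)
        + (2 * ((d:ℂ) * ((d:ℂ) - 1))⁻¹) •
          mixM ((1 : Matrix (Fin d) (Fin d) ℂ) - (outer ψ)ᵀ) (Pasym d),
      ⟨?_, ((d:ℂ)⁻¹ • (1 : Matrix (Fin d) (Fin d) ℂ)), ?_, ?_, ?_⟩, ?_⟩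
    · exact (psd_smul (psd_mixM hQpsd hPspsd) h2a0).add
        (psd_smul (psd_mixM h1mQpsd hPapsd) h2b0)
    · exact psd_smul Matrix.PosSemidef.one hdinv0
    · rw [Matrix.trace_smul, trace_one_d, smul_eq_mul]
      exact inv_mul_cancel₀ hdne
    · -- partial trace constraint
      funext x x'
      simp only [ptrRight, Matrix.add_apply, Matrix.smul_apply, mixM_apply, smul_eq_mul,
        Matrix.sub_apply]
      simp_rw [← mul_assoc]
      rw [Finset.sum_add_distrib, ← Finset.mul_sum, ← Finset.mul_sum,
        sum_psym_diag, sum_pasym_diag]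
      simp only [Matrix.kroneckerMap_apply, Matrix.smul_apply, smul_eq_mul]
      field_simp
      ring
    · -- value of the objective
      rw [hOm, Matrix.add_mul, Matrix.mul_add, Matrix.mul_add]
      simp only [Matrix.smul_mul, Matrix.mul_smul, smul_smul, Matrix.trace_add,
        Matrix.trace_smul, trace_mixM_mul, smul_eq_mul]
      rw [tA, tB, tC, tD, tPs, tPa, tPsPa, tPaPs]
      push_cast
      field_simp
      ring
  · -- upper bound
    rintro r ⟨S, ⟨hSpsd, σ, hσpsd, hσtr, hσeq⟩, hrtr⟩
    set M : Matrix (Fin d) (Fin d) ℂ :=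
      (2 * ((d:ℂ)*((d:ℂ)+1))⁻¹) • (outer ψ)ᵀ
      + ((d:ℂ)*((d:ℂ)-1))⁻¹ • ((1 : Matrix (Fin d) (Fin d) ℂ) - (outer ψ)ᵀ) with hM
    set W : Matrix ((Fin d × Fin d) × Fin d) ((Fin d × Fin d) × Fin d) ℂ :=
      (2 * ((d:ℂ)*((d:ℂ)+1))⁻¹) • mixM ((outer ψ)ᵀ) (Pasym d)
      + (((d:ℂ)*((d:ℂ)-1))⁻¹ - ((d:ℂ)*((d:ℂ)+1))⁻¹) •
        mixM ((1 : Matrix (Fin d) (Fin d) ℂ) - (outer ψ)ᵀ) (Psym d) with hW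
    have hkey : OmegaInv ψ + W = mixM M 1 := by
      rw [hOm, hW, hM]
      funext x y
      have h1 : (1 : Matrix (Fin d × Fin d) (Fin d × Fin d) ℂ) (x.1.1, x.2) (y.1.1, y.2)
          = Psym d (x.1.1, x.2) (y.1.1, y.2) + Pasym d (x.1.1, x.2) (y.1.1, y.2) := by
        rw [← psym_add_pasym d, Matrix.add_apply]
      simp only [Matrix.add_apply, Matrix.smul_apply, Matrix.sub_apply, mixM_apply,
        smul_eq_mul, h1]
      ring
    have hWpsd : W.PosSemidef := by
      rw [hW]
      exact (psd_smul (psd_mixM hQpsd hPapsd) h2a0).add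
        (psd_smul (psd_mixM h1mQpsd hPspsd) hba0)
    have htW : 0 ≤ (S * W).trace := psd_trace_mul_nonneg hSpsd hWpsd
    have hSsub : S = (S.submatrix ⇑(eIOF d).symm ⇑(eIOF d).symm).submatrix
        ⇑(eIOF d) ⇑(eIOF d) := by
      rw [Matrix.submatrix_submatrix, Equiv.symm_comp_self, Matrix.submatrix_id_id]
    have htr1 : (S * mixM M 1).trace
        = ((S.submatrix ⇑(eIOF d).symm ⇑(eIOF d).symm) *
            (M ⊗ₖ (1 : Matrix (Fin d × Fin d) (Fin d × Fin d) ℂ))).trace := by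
      conv_lhs => rw [hSsub]
      rw [show mixM M (1 : Matrix (Fin d × Fin d) (Fin d × Fin d) ℂ)
          = (M ⊗ₖ (1 : Matrix (Fin d × Fin d) (Fin d × Fin d) ℂ)).submatrix
              ⇑(eIOF d) ⇑(eIOF d) from rfl]
      rw [Matrix.submatrix_mul_equiv, trace_submatrix_equiv]
    have hptr' : ptrRight (S.submatrix ⇑(eIOF d).symm ⇑(eIOF d).symm)
        = (1 : Matrix (Fin d) (Fin d) ℂ) := by
      funext o o'
      show (∑ p : Fin d × Fin d, S ((p.1, o), p.2) ((p.1, o'), p.2))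
        = (1 : Matrix (Fin d) (Fin d) ℂ) o o'
      rw [Fintype.sum_prod_type]
      have h2 : ∀ i : Fin d, (∑ f, S ((i,o),f) ((i,o'),f)) = ptrRight S (i,o) (i,o') :=
        fun i => rfl
      simp_rw [h2, hσeq, Matrix.kroneckerMap_apply]
      have h4 : ∀ x : Fin d, σ x x * (1 : Matrix (Fin d) (Fin d) ℂ) (x, o).2 (x, o').2
          = σ x x * (1 : Matrix (Fin d) (Fin d) ℂ) o o' := fun x => rfl
      simp_rw [h4]
      rw [← Finset.sum_mul]
      have h3 : (∑ i, σ i i) = σ.trace := rfl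
      rw [h3, hσtr, one_mul]
    have hMtr : M.trace = 2 * ((d:ℂ)*((d:ℂ)+1))⁻¹ + ((d:ℂ)*((d:ℂ)-1))⁻¹ * ((d:ℂ) - 1) := by
      rw [hM, Matrix.trace_add, Matrix.trace_smul, Matrix.trace_smul, Matrix.trace_sub,
        trace_one_d, Q_trace hψ]
      simp only [smul_eq_mul]
      ring
    have hfinal : (r : ℂ) + (S * W).trace
        = (((((d:ℝ)+3)/((d:ℝ)*((d:ℝ)+1))) : ℝ) : ℂ) := by
      rw [← hrtr, ← Matrix.trace_add, ← Matrix.mul_add, hkey, htr1, trace_mul_kron_one,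
        hptr', Matrix.one_mul, hMtr]
      push_cast
      field_simp
      ring
    have ht2 : (S * W).trace
        = (((((d:ℝ)+3)/((d:ℝ)*((d:ℝ)+1)) - r : ℝ)) : ℂ) := by
      rw [Complex.ofReal_sub]
      linear_combination hfinal
    rw [ht2] at htW
    have := Complex.zero_le_real.mp htW
    linarith
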